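/- Suppose for each element e the operators satisfy stiffness consistency S_jᵉ 𝟙ᵉ = 0 and the discrete divergence theorem (S_jᵉ)ᵀ 𝟙ᵉ = Σ_{m∈Mᵉ} (P^{m,e})ᵀ W^m n_j^{m[e]}, and the numerical flux is consistent. Then if the discrete solution is constant (v_iᵉ = β_i 𝟙ᵉ, σ_{ij}ᵉ = α_{ij} 𝟙ᵉ for all e with α symmetric), the right-hand sides of the semi-discrete scheme M_ρᵉ dv_iᵉ/dt = −(S_jᵉ)ᵀ σ_{ij}ᵉ + Σ_m (P^{m,e})ᵀ W^m T_i^{*m[e]} and M_{S_{ijkl}}ᵉ dσ_{kl}ᵉ/dt = (1/2)(S_jᵉ v_iᵉ + S_iᵉ v_jᵉ) + Σ_m (P_{n_j}^{m,e})ᵀ W^m (v_i^{*m} − v_i^{m[e]}) vanish identically, so the constant state is preserved. -/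

import Mathlib

open Matrix BigOperators

private lemma mulVec_sum' {k l : ℕ} (A : Matrix (Fin k) (Fin l) ℝ) {ι : Type*}
    (s : Finset ι) (f : ι → Fin l → ℝ) :
    A *ᵥ (∑ x ∈ s, f x) = ∑ x ∈ s, A *ᵥ f x := by
  funext p
  simp [mulVec, dotProduct, Finset.sum_apply, Finset.mul_sum]
  rw [Finset.sum_comm]

theorem constant_state_preservation
    {E M : Type} [Fintype E] [Fintype M] [DecidableEq E] [DecidableEq M]
    (n : E → ℕ) (nm : M → ℕ)
    (oneE : (e : E) → Fin (n e) → ℝ) (oneM : (m : M) → Fin (nm m) → ℝ)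
    (S : (e : E) → Fin 3 → Matrix (Fin (n e)) (Fin (n e)) ℝ)
    (P : (m : M) → (e : E) → Matrix (Fin (nm m)) (Fin (n e)) ℝ)
    (Pn : (m : M) → (e : E) → Fin 3 → Matrix (Fin (nm m)) (Fin (n e)) ℝ)
    (W : (m : M) → Matrix (Fin (nm m)) (Fin (nm m)) ℝ)
    (nvec : (m : M) → Fin 3 → Fin (nm m) → ℝ)
    (Eminus Eplus : M → Finset E) (Me : E → Finset M)
    (hMe : ∀ e m, m ∈ Me e ↔ e ∈ Eminus m ∨ e ∈ Eplus m)
    (α : Fin 3 → Fin 3 → ℝ) (hα : ∀ i j, α i j = α j i) (β : Fin 3 → ℝ)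
    (hstiff : ∀ e j, S e j *ᵥ oneE e = 0)
    (hdiv : ∀ e j, (S e j)ᵀ *ᵥ oneE e =
      ∑ m ∈ Me e, (P m e)ᵀ *ᵥ (W m *ᵥ
        (if e ∈ Eminus m then nvec m j else -(nvec m j))))
    (hproj : ∀ m, (∑ e ∈ Eminus m, P m e *ᵥ oneE e) = oneM m ∧
                  (∑ e ∈ Eplus m, P m e *ᵥ oneE e) = oneM m)
    (vminus vplus Tminus Tplus vstar Tstar : (m : M) → Fin 3 → Fin (nm m) → ℝ)
    (hvminus : ∀ m i, vminus m i = ∑ e ∈ Eminus m, P m e *ᵥ (β i • oneE e))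
    (hvplus : ∀ m i, vplus m i = ∑ e ∈ Eplus m, P m e *ᵥ (β i • oneE e))
    (hTminus : ∀ m i, Tminus m i = ∑ e ∈ Eminus m, ∑ j, Pn m e j *ᵥ (α i j • oneE e))
    (hTplus : ∀ m i, Tplus m i = -∑ e ∈ Eplus m, ∑ j, Pn m e j *ᵥ (α i j • oneE e))
    (htrac : ∀ m i, Tminus m i = (fun p => ∑ j, α i j * nvec m j p) ∧
                    Tplus m i = (fun p => ∑ j, α i j * nvec m j p))
    (hflux : ∀ m i, vminus m i = vplus m i → Tminus m i = Tplus m i →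
      vstar m i = vminus m i ∧ Tstar m i = Tminus m i) :
    (∀ e i, -(∑ j, (S e j)ᵀ *ᵥ (α i j • oneE e))
        + ∑ m ∈ Me e, (P m e)ᵀ *ᵥ (W m *ᵥ
            (if e ∈ Eminus m then Tstar m i else -(Tstar m i))) = 0)
    ∧ (∀ e i j, (1 / 2 : ℝ) • (S e j *ᵥ (β i • oneE e) + S e i *ᵥ (β j • oneE e))
        + ∑ m ∈ Me e, (Pn m e j)ᵀ *ᵥ (W m *ᵥ (vstar m i -
            (if e ∈ Eminus m then vminus m i else vplus m i))) = 0) := by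
  -- vminus = vplus = β • oneM
  have hvm : ∀ m i, vminus m i = β i • oneM m := by
    intro m i
    rw [hvminus]
    simp only [mulVec_smul, ← Finset.smul_sum, (hproj m).1]
  have hvp : ∀ m i, vplus m i = β i • oneM m := by
    intro m i
    rw [hvplus]
    simp only [mulVec_smul, ← Finset.smul_sum, (hproj m).2]
  have hveq : ∀ m i, vminus m i = vplus m i := fun m i => by rw [hvm, hvp]
  have hTeq : ∀ m i, Tminus m i = Tplus m i := fun m i => by
    rw [(htrac m i).1, (htrac m i).2]
  have hstar := fun m i => hflux m i (hveq m i) (hTeq m i)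
  -- Tstar as combination of normals
  have hTstar : ∀ m i, Tstar m i = ∑ j, α i j • nvec m j := by
    intro m i
    rw [(hstar m i).2, (htrac m i).1]
    funext p
    simp [Finset.sum_apply]
  constructor
  · intro e i
    have key : (∑ j, (S e j)ᵀ *ᵥ (α i j • oneE e))
        = ∑ m ∈ Me e, (P m e)ᵀ *ᵥ (W m *ᵥ
            (if e ∈ Eminus m then Tstar m i else -(Tstar m i))) := by
      calc (∑ j, (S e j)ᵀ *ᵥ (α i j • oneE e))
          = ∑ j, α i j • ((S e j)ᵀ *ᵥ oneE e) := by
            simp [mulVec_smul]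
        _ = ∑ j, α i j • ∑ m ∈ Me e, (P m e)ᵀ *ᵥ (W m *ᵥ
              (if e ∈ Eminus m then nvec m j else -(nvec m j))) := by
            simp only [hdiv]
        _ = ∑ m ∈ Me e, ∑ j, α i j • ((P m e)ᵀ *ᵥ (W m *ᵥ
              (if e ∈ Eminus m then nvec m j else -(nvec m j)))) := by
            rw [Finset.sum_comm]
            simp [Finset.smul_sum]
        _ = _ := by
            refine Finset.sum_congr rfl fun m _ => ?_
            by_cases he : e ∈ Eminus m <;>
              simp [he, hTstar, mulVec_mulVec, mulVec_neg, mulVec_sum', mulVec_smul]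
    rw [key]
    ring_nf
  · intro e i j
    have h1 : S e j *ᵥ (β i • oneE e) = 0 := by rw [mulVec_smul, hstiff, smul_zero]
    have h2 : S e i *ᵥ (β j • oneE e) = 0 := by rw [mulVec_smul, hstiff, smul_zero]
    rw [h1, h2]
    have : ∀ m ∈ Me e, (Pn m e j)ᵀ *ᵥ (W m *ᵥ (vstar m i -
        (if e ∈ Eminus m then vminus m i else vplus m i))) = 0 := by
      intro m _
      have : vstar m i - (if e ∈ Eminus m then vminus m i else vplus m i) = 0 := by
        by_cases he : e ∈ Eminus m <;>
          simp [he, (hstar m i).1, hveq m i, sub_self]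
      rw [this]
      simp
    rw [Finset.sum_congr rfl this]
    simp
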